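/- Let W ∈ L²(ℤ_p × ℤ_p), W_in ∈ L²(ℤ_p × ℤ_p), x ∈ L²(ℤ_p), and let φ : ℝ → ℝ be Lipschitz with constant L_φ and φ(0) = 0, with 0 < L_φ ‖W‖₂ < 1. For ξ ∈ L²(ℤ_p), let h(ξ) denote the unique solution in L²(ℤ_p) of h(u) = ∫_{ℤ_p} W(u,y) φ(h(y)) dμ(y) + ∫_{ℤ_p} W_in(u,y) x(y) dμ(y) + ξ(u). Then for all ξ₁, ξ₂ ∈ L²(ℤ_p), ‖h(ξ₁) − h(ξ₂)‖₂ ≤ (1 − L_φ ‖W‖₂)⁻¹ ‖ξ₁ − ξ₂‖₂; in particular the hidden state depends continuously on the bias ξ. -/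

import Mathlib

open MeasureTheory
open scoped NNReal ENNReal

noncomputable instance (p : ℕ) [Fact p.Prime] : MeasurableSpace ℤ_[p] := borel _
instance (p : ℕ) [Fact p.Prime] : BorelSpace ℤ_[p] := ⟨rfl⟩

/-- The normalized Haar measure on the compact additive group `ℤ_[p]`
(so that `padicHaar p Set.univ = 1`). -/
noncomputable def padicHaar (p : ℕ) [Fact p.Prime] : Measure ℤ_[p] :=
  Measure.addHaarMeasure (⊤ : TopologicalSpace.PositiveCompacts ℤ_[p])

instance (p : ℕ) [Fact p.Prime] : IsProbabilityMeasure (padicHaar p) :=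
  ⟨by
    have := Measure.addHaarMeasure_self
      (K₀ := (⊤ : TopologicalSpace.PositiveCompacts ℤ_[p]))
    simpa [padicHaar] using this⟩

/-- Hilbert–Schmidt bound: `‖∫ K(u,y) f(y) dν(y)‖_{L²(μ)} ≤ ‖K‖_{L²(μ×ν)} ‖f‖_{L²(ν)}`. -/
lemma hs_bound {α β : Type*} [MeasurableSpace α] [MeasurableSpace β]
    {μ : Measure α} {ν : Measure β} [SFinite μ] [SFinite ν]
    (K : α × β → ℝ) (f : β → ℝ)
    (hK : MemLp K 2 (μ.prod ν)) (hf : MemLp f 2 ν) :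
    eLpNorm (fun u => ∫ y, K (u, y) * f y ∂ν) 2 μ
      ≤ eLpNorm K 2 (μ.prod ν) * eLpNorm f 2 ν := by
  obtain ⟨hKm, hKfin⟩ := hK
  obtain ⟨hfm, hffin⟩ := hf
  set K' := hKm.mk K with hK'def
  set f' := hfm.mk f with hf'def
  have hK'sm : StronglyMeasurable K' := hKm.stronglyMeasurable_mk
  have hf'sm : StronglyMeasurable f' := hfm.stronglyMeasurable_mk
  have hKeq : K =ᵐ[μ.prod ν] K' := hKm.ae_eq_mk
  have hfeq : f =ᵐ[ν] f' := hfm.ae_eq_mk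
  have hg : (fun u => ∫ y, K (u, y) * f y ∂ν)
      =ᵐ[μ] (fun u => ∫ y, K' (u, y) * f' y ∂ν) := by
    have haesec := Measure.ae_ae_of_ae_prod (p := fun z : α × β => K z = K' z) hKeq
    filter_upwards [haesec] with u hu
    refine integral_congr_ae ?_
    filter_upwards [hu, hfeq] with y h1 h2
    rw [h1, h2]
  rw [eLpNorm_congr_ae hg, eLpNorm_congr_ae hKeq, eLpNorm_congr_ae hfeq]
  rw [eLpNorm_congr_ae hfeq] at hffin
  rw [eLpNorm_congr_ae hKeq] at hKfin
  -- notation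
  set IK := ∫⁻ z, (‖K' z‖₊ : ℝ≥0∞) ^ (2 : ℝ) ∂(μ.prod ν) with hIK
  set IF := ∫⁻ y, (‖f' y‖₊ : ℝ≥0∞) ^ (2 : ℝ) ∂ν with hIF
  have hKnorm : eLpNorm K' 2 (μ.prod ν) = IK ^ (1 / (2 : ℝ)) := by
    rw [eLpNorm_eq_lintegral_rpow_enorm_toReal (by norm_num) (by norm_num)]
    simp only [ENNReal.toReal_ofNat]; rfl
  have hfnorm : eLpNorm f' 2 ν = IF ^ (1 / (2 : ℝ)) := by
    rw [eLpNorm_eq_lintegral_rpow_enorm_toReal (by norm_num) (by norm_num)]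
    simp only [ENNReal.toReal_ofNat]; rfl
  have hIFfin : IF ≠ ∞ := by
    intro h
    rw [hfnorm, h] at hffin
    simp [ENNReal.top_rpow_of_pos (by norm_num : (0:ℝ) < 1/2)] at hffin
  have hmK : Measurable fun z => (‖K' z‖₊ : ℝ≥0∞) := hK'sm.measurable.enorm
  have hmf : Measurable fun y => (‖f' y‖₊ : ℝ≥0∞) := hf'sm.measurable.enorm
  -- pointwise Cauchy–Schwarz
  have hconj : Real.HolderConjugate 2 2 := ⟨by norm_num, by norm_num, by norm_num⟩
  have pointwise : ∀ u, (‖∫ y, K' (u, y) * f' y ∂ν‖₊ : ℝ≥0∞)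
      ≤ (∫⁻ y, (‖K' (u, y)‖₊ : ℝ≥0∞) ^ (2 : ℝ) ∂ν) ^ (1 / (2 : ℝ)) * IF ^ (1 / (2 : ℝ)) := by
    intro u
    calc (‖∫ y, K' (u, y) * f' y ∂ν‖₊ : ℝ≥0∞)
        ≤ ∫⁻ y, (‖K' (u, y) * f' y‖₊ : ℝ≥0∞) ∂ν :=
          enorm_integral_le_lintegral_enorm _
      _ = ∫⁻ y, ((fun y => (‖K' (u, y)‖₊ : ℝ≥0∞)) * fun y => (‖f' y‖₊ : ℝ≥0∞)) y ∂ν := by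
          simp [nnnorm_mul, ENNReal.coe_mul]
      _ ≤ (∫⁻ y, (‖K' (u, y)‖₊ : ℝ≥0∞) ^ (2 : ℝ) ∂ν) ^ (1 / (2 : ℝ))
            * (∫⁻ y, (‖f' y‖₊ : ℝ≥0∞) ^ (2 : ℝ) ∂ν) ^ (1 / (2 : ℝ)) :=
          ENNReal.lintegral_mul_le_Lp_mul_Lq ν hconj
            (hmK.comp measurable_prodMk_left).aemeasurable hmf.aemeasurable
  -- main lintegral estimate
  have key : ∫⁻ u, (‖∫ y, K' (u, y) * f' y ∂ν‖₊ : ℝ≥0∞) ^ (2 : ℝ) ∂μ ≤ IK * IF := by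
    have step1 : ∫⁻ u, (‖∫ y, K' (u, y) * f' y ∂ν‖₊ : ℝ≥0∞) ^ (2 : ℝ) ∂μ
        ≤ ∫⁻ u, (∫⁻ y, (‖K' (u, y)‖₊ : ℝ≥0∞) ^ (2 : ℝ) ∂ν) * IF ∂μ := by
      refine lintegral_mono fun u => ?_
      calc (‖∫ y, K' (u, y) * f' y ∂ν‖₊ : ℝ≥0∞) ^ (2 : ℝ)
          ≤ ((∫⁻ y, (‖K' (u, y)‖₊ : ℝ≥0∞) ^ (2 : ℝ) ∂ν) ^ (1 / (2 : ℝ))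
              * IF ^ (1 / (2 : ℝ))) ^ (2 : ℝ) :=
            ENNReal.rpow_le_rpow (pointwise u) (by norm_num)
        _ = (∫⁻ y, (‖K' (u, y)‖₊ : ℝ≥0∞) ^ (2 : ℝ) ∂ν) * IF := by
            rw [ENNReal.mul_rpow_of_nonneg _ _ (by norm_num : (0:ℝ) ≤ 2),
              ← ENNReal.rpow_mul, ← ENNReal.rpow_mul]
            norm_num
    have step2 : ∫⁻ u, (∫⁻ y, (‖K' (u, y)‖₊ : ℝ≥0∞) ^ (2 : ℝ) ∂ν) * IF ∂μ = IK * IF := by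
      rw [lintegral_mul_const' IF _ hIFfin, hIK,
        lintegral_prod _ ((hmK.pow_const (2 : ℝ)).aemeasurable)]
    exact step1.trans step2.le
  -- conclude
  have h2 : eLpNorm (fun u => ∫ y, K' (u, y) * f' y ∂ν) 2 μ
      = (∫⁻ u, (‖∫ y, K' (u, y) * f' y ∂ν‖₊ : ℝ≥0∞) ^ (2 : ℝ) ∂μ) ^ (1 / (2 : ℝ)) := by
    rw [eLpNorm_eq_lintegral_rpow_enorm_toReal (by norm_num) (by norm_num)]
    simp only [ENNReal.toReal_ofNat]; rfl
  rw [h2, hKnorm, hfnorm, ← ENNReal.mul_rpow_of_nonneg _ _ (by norm_num : (0:ℝ) ≤ 1/2)]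
  exact ENNReal.rpow_le_rpow key (by norm_num)

/-- In the contraction regime, the hidden state depends
`(1 − Lφ‖W‖₂)⁻¹`-Lipschitz-continuously on the bias `ξ`. -/
theorem stmt_6 (p : ℕ) [Fact p.Prime]
    (W Win : ℤ_[p] × ℤ_[p] → ℝ) (x : ℤ_[p] → ℝ)
    (hW : MemLp W 2 ((padicHaar p).prod (padicHaar p)))
    (hWin : MemLp Win 2 ((padicHaar p).prod (padicHaar p)))
    (hx : MemLp x 2 (padicHaar p))
    (φ : ℝ → ℝ) (Lφ : ℝ≥0) (hφ : LipschitzWith Lφ φ) (hφ0 : φ 0 = 0)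
    (hpos : 0 < (Lφ : ℝ≥0∞) * eLpNorm W 2 ((padicHaar p).prod (padicHaar p)))
    (hlt : (Lφ : ℝ≥0∞) * eLpNorm W 2 ((padicHaar p).prod (padicHaar p)) < 1)
    (ξ₁ ξ₂ : ℤ_[p] → ℝ) (hξ₁ : MemLp ξ₁ 2 (padicHaar p)) (hξ₂ : MemLp ξ₂ 2 (padicHaar p))
    (h₁ h₂ : ℤ_[p] → ℝ) (hh₁ : MemLp h₁ 2 (padicHaar p)) (hh₂ : MemLp h₂ 2 (padicHaar p))
    (hfix₁ : ∀ᵐ u ∂(padicHaar p),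
      h₁ u = ∫ y, W (u, y) * φ (h₁ y) ∂(padicHaar p)
          + ∫ y, Win (u, y) * x y ∂(padicHaar p) + ξ₁ u)
    (hfix₂ : ∀ᵐ u ∂(padicHaar p),
      h₂ u = ∫ y, W (u, y) * φ (h₂ y) ∂(padicHaar p)
          + ∫ y, Win (u, y) * x y ∂(padicHaar p) + ξ₂ u) :
    eLpNorm (fun u => h₁ u - h₂ u) 2 (padicHaar p)
      ≤ (1 - (Lφ : ℝ≥0∞) * eLpNorm W 2 ((padicHaar p).prod (padicHaar p)))⁻¹
          * eLpNorm (fun u => ξ₁ u - ξ₂ u) 2 (padicHaar p) := by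
  set ν := padicHaar p with hν
  set q : ℝ≥0∞ := (Lφ : ℝ≥0∞) * eLpNorm W 2 (ν.prod ν) with hq
  set N := eLpNorm (fun u => h₁ u - h₂ u) 2 ν with hN
  set E := eLpNorm (fun u => ξ₁ u - ξ₂ u) 2 ν with hE
  -- measure preserving projection
  have mp : MeasurePreserving (Prod.snd : ℤ_[p] × ℤ_[p] → ℤ_[p]) (ν.prod ν) ν :=
    ⟨measurable_snd, by rw [Measure.map_snd_prod]; simp⟩
  -- φ ∘ hᵢ ∈ L²
  have hφh₁ : MemLp (fun y => φ (h₁ y)) 2 ν := hφ.comp_memLp hφ0 hh₁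
  have hφh₂ : MemLp (fun y => φ (h₂ y)) 2 ν := hφ.comp_memLp hφ0 hh₂
  set Φ : ℤ_[p] → ℝ := fun y => φ (h₁ y) - φ (h₂ y) with hΦ
  have hΦmem : MemLp Φ 2 ν := hφh₁.sub hφh₂
  -- product integrability for Fubini
  have hr : (1 : ℝ≥0∞) / 1 = 1 / 2 + 1 / 2 := by
    rw [ENNReal.add_halves]
    norm_num
  have hint : ∀ (h : ℤ_[p] → ℝ), MemLp (fun y => φ (h y)) 2 ν →
      Integrable (fun z : ℤ_[p] × ℤ_[p] => W z * φ (h z.2)) (ν.prod ν) := by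
    intro h hmemh
    have hF : MemLp (fun z : ℤ_[p] × ℤ_[p] => φ (h z.2)) 2 (ν.prod ν) :=
      hmemh.comp_measurePreserving mp
    have : MemLp (W • fun z : ℤ_[p] × ℤ_[p] => φ (h z.2)) 1 (ν.prod ν) :=
      hF.smul hW
    exact memLp_one_iff_integrable.mp this
  have hsec₁ := (hint h₁ hφh₁).prod_right_ae
  have hsec₂ := (hint h₂ hφh₂).prod_right_ae
  -- the difference identity
  have hdiff : (fun u => h₁ u - h₂ u)
      =ᵐ[ν] fun u => (∫ y, W (u, y) * Φ y ∂ν) + (ξ₁ u - ξ₂ u) := by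
    filter_upwards [hfix₁, hfix₂, hsec₁, hsec₂] with u e1 e2 i1 i2
    have hsub : ∫ y, W (u, y) * Φ y ∂ν
        = (∫ y, W (u, y) * φ (h₁ y) ∂ν) - ∫ y, W (u, y) * φ (h₂ y) ∂ν := by
      simp_rw [hΦ, mul_sub]
      exact integral_sub i1 i2
    rw [e1, e2, hsub]
    ring
  -- measurability of the integral term
  have hWΦprod : AEStronglyMeasurable (fun z : ℤ_[p] × ℤ_[p] => W z * Φ z.2) (ν.prod ν) :=
    hW.1.mul (hΦmem.comp_measurePreserving mp).1
  have hgsm : AEStronglyMeasurable (fun u => ∫ y, W (u, y) * Φ y ∂ν) ν :=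
    hWΦprod.integral_prod_right'
  -- Lipschitz bound for Φ
  have hΦbound : eLpNorm Φ 2 ν ≤ (Lφ : ℝ≥0∞) * N := by
    have hb : ∀ᵐ y ∂ν, ‖Φ y‖ ≤ (Lφ : ℝ) * ‖h₁ y - h₂ y‖ := by
      refine Filter.Eventually.of_forall fun y => ?_
      simpa [hΦ, Real.dist_eq, Real.norm_eq_abs] using hφ.dist_le_mul (h₁ y) (h₂ y)
    have := eLpNorm_le_nnreal_smul_eLpNorm_of_ae_le_mul hb 2
    simpa [ENNReal.smul_def, smul_eq_mul] using this
  -- the key inequality N ≤ q * N + E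
  have hkey : N ≤ q * N + E := by
    calc N = eLpNorm (fun u => (∫ y, W (u, y) * Φ y ∂ν) + (ξ₁ u - ξ₂ u)) 2 ν :=
          eLpNorm_congr_ae hdiff
      _ ≤ eLpNorm (fun u => ∫ y, W (u, y) * Φ y ∂ν) 2 ν + E :=
          eLpNorm_add_le hgsm (hξ₁.sub hξ₂).1 one_le_two
      _ ≤ eLpNorm W 2 (ν.prod ν) * eLpNorm Φ 2 ν + E := by
          gcongr
          exact hs_bound W Φ hW hΦmem
      _ ≤ eLpNorm W 2 (ν.prod ν) * ((Lφ : ℝ≥0∞) * N) + E := by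
          gcongr
      _ = q * N + E := by rw [hq]; ring_nf
  -- finish with ENNReal algebra
  have hNfin : N ≠ ∞ := (hh₁.sub hh₂).eLpNorm_lt_top.ne
  have hq1 : q < 1 := hlt
  have h1q0 : (1 : ℝ≥0∞) - q ≠ 0 := by
    simpa [tsub_eq_zero_iff_le, not_le] using hq1
  have h1qtop : (1 : ℝ≥0∞) - q ≠ ∞ := by
    exact (tsub_le_self.trans_lt (by norm_num : (1:ℝ≥0∞) < ∞)).ne
  have hsub : (1 - q) * N ≤ E := by
    rw [ENNReal.sub_mul (fun _ _ => hNfin), one_mul, tsub_le_iff_right, add_comm]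
    exact hkey
  calc N = ((1 - q)⁻¹ * (1 - q)) * N := by
        rw [ENNReal.inv_mul_cancel h1q0 h1qtop, one_mul]
    _ = (1 - q)⁻¹ * ((1 - q) * N) := by rw [mul_assoc]
    _ ≤ (1 - q)⁻¹ * E := by exact mul_le_mul_right hsub _
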